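/- Let A, ε_y, ε_m : Ω → ℝ be square-integrable random variables with E[ε_y] = 0, E[ε_m] = 0, Cov(A, ε_y) = 0, Cov(A, ε_m) = 0, and Var(A) > 0. Let α0, α1, α2, β0, β1 ∈ ℝ and define M = β0 + β1·A + ε_m and Y = α0 + α1·A + α2·M + ε_y. Then the simple-regression slope of Y on A satisfies Cov(A, Y) / Var(A) = α1 + α2·β1; equivalently, the difference-method quantity Cov(A, Y)/Var(A) − α1 equals the product-method quantity α2·β1. -/

import Mathlib

open MeasureTheory ProbabilityTheory

/-- Covariance of two real random variables. -/
noncomputable def cov {Ω : Type*} [MeasurableSpace Ω] (P : Measure Ω) (X Y : Ω → ℝ) : ℝ :=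
  ∫ ω, (X ω - ∫ x, X x ∂P) * (Y ω - ∫ x, Y x ∂P) ∂P

/-- Product of two L² functions is integrable. -/
lemma memℒp_two_integrable_mul {Ω : Type*} [MeasurableSpace Ω] {P : Measure Ω}
    {f g : Ω → ℝ} (hf : MemLp f 2 P) (hg : MemLp g 2 P) :
    Integrable (fun ω => f ω * g ω) P := by
  refine Integrable.mono' (((hf.integrable_sq.add hg.integrable_sq)).div_const 2)
    (hf.1.mul hg.1) (ae_of_all _ fun ω => ?_)
  have h := sq_nonneg (|f ω| - |g ω|)
  have h2 : ‖f ω * g ω‖ = |f ω| * |g ω| := by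
    simp [abs_mul]
  rw [h2]
  simp only [Pi.add_apply]
  nlinarith [sq_abs (f ω), sq_abs (g ω)]

/-- In the linear structural equation model, the simple-regression slope of `Y` on `A`
is `α1 + α2·β1`; equivalently the difference-method quantity equals the
product-method quantity `α2·β1`. -/
theorem product_method_eq_difference_method
    {Ω : Type*} [MeasurableSpace Ω] (P : Measure Ω) [IsProbabilityMeasure P]
    (A εy εm : Ω → ℝ)
    (hA : MemLp A 2 P) (hεy : MemLp εy 2 P) (hεm : MemLp εm 2 P)
    (hεy0 : ∫ ω, εy ω ∂P = 0) (hεm0 : ∫ ω, εm ω ∂P = 0)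
    (hAεy : cov P A εy = 0) (hAεm : cov P A εm = 0)
    (hVarA : 0 < variance A P)
    (α0 α1 α2 β0 β1 : ℝ)
    (M Y : Ω → ℝ)
    (hM : ∀ ω, M ω = β0 + β1 * A ω + εm ω)
    (hY : ∀ ω, Y ω = α0 + α1 * A ω + α2 * M ω + εy ω) :
    cov P A Y / variance A P = α1 + α2 * β1
    ∧ cov P A Y / variance A P - α1 = α2 * β1 := by
  have hAi : Integrable A P := hA.integrable one_le_two
  have hεyi : Integrable εy P := hεy.integrable one_le_two
  have hεmi : Integrable εm P := hεm.integrable one_le_two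
  set μ : ℝ := ∫ x, A x ∂P with hμ
  -- integral of Y
  have hYfun : Y = fun ω => (α0 + α2 * β0) + (α1 + α2 * β1) * A ω + (α2 * εm ω + εy ω) := by
    funext ω; rw [hY ω, hM ω]; ring
  have hintY : ∫ ω, Y ω ∂P = (α0 + α2 * β0) + (α1 + α2 * β1) * μ := by
    rw [hYfun]
    rw [integral_add (f := fun ω => (α0 + α2 * β0) + (α1 + α2 * β1) * A ω)
        (g := fun ω => α2 * εm ω + εy ω)
        ((integrable_const _).add (hAi.const_mul _)) ((hεmi.const_mul _).add hεyi),
      integral_add (f := fun _ => α0 + α2 * β0) (g := fun ω => (α1 + α2 * β1) * A ω)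
        (integrable_const _) (hAi.const_mul _),
      integral_add (f := fun ω => α2 * εm ω) (g := εy) (hεmi.const_mul _) hεyi,
      integral_const_mul, integral_const_mul, hεm0, hεy0, integral_const]
    simp [hμ]
  -- memℒp of A - const
  have hAc : MemLp (fun ω => A ω - μ) 2 P := hA.sub (memLp_const μ)
  -- covariance rewrites
  have hcovm : cov P A εm = ∫ ω, (A ω - μ) * εm ω ∂P := by
    unfold cov; rw [hεm0]; simp [hμ]
  have hcovy : cov P A εy = ∫ ω, (A ω - μ) * εy ω ∂P := by
    unfold cov; rw [hεy0]; simp [hμ]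
  -- variance
  have hvar : variance A P = ∫ ω, (A ω - μ) * (A ω - μ) ∂P := by
    rw [variance_eq_integral hA.1.aemeasurable]
    congr 1
    funext ω
    simp [sq, hμ]
  -- expand cov P A Y
  have hcov : cov P A Y = (α1 + α2 * β1) * variance A P
      + α2 * cov P A εm + cov P A εy := by
    unfold cov
    rw [hintY]
    have hpt : ∀ ω, (A ω - μ) * (Y ω - ((α0 + α2 * β0) + (α1 + α2 * β1) * μ))
        = (α1 + α2 * β1) * ((A ω - μ) * (A ω - μ))
          + α2 * ((A ω - μ) * εm ω) + (A ω - μ) * εy ω := by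
      intro ω; rw [hY ω, hM ω]; ring
    calc ∫ ω, (A ω - μ) * (Y ω - ((α0 + α2 * β0) + (α1 + α2 * β1) * μ)) ∂P
        = ∫ ω, ((α1 + α2 * β1) * ((A ω - μ) * (A ω - μ))
          + α2 * ((A ω - μ) * εm ω) + (A ω - μ) * εy ω) ∂P := by
          exact integral_congr_ae (ae_of_all _ hpt)
      _ = (α1 + α2 * β1) * (∫ ω, (A ω - μ) * (A ω - μ) ∂P)
          + α2 * (∫ ω, (A ω - μ) * εm ω ∂P) + ∫ ω, (A ω - μ) * εy ω ∂P := by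
          rw [integral_add
              (f := fun ω => (α1 + α2 * β1) * ((A ω - μ) * (A ω - μ))
                + α2 * ((A ω - μ) * εm ω))
              (g := fun ω => (A ω - μ) * εy ω)
              (Integrable.add
                ((memℒp_two_integrable_mul hAc hAc).const_mul _)
                ((memℒp_two_integrable_mul hAc hεm).const_mul _))
              (memℒp_two_integrable_mul hAc hεy),
            integral_add
              (f := fun ω => (α1 + α2 * β1) * ((A ω - μ) * (A ω - μ)))
              (g := fun ω => α2 * ((A ω - μ) * εm ω))
              ((memℒp_two_integrable_mul hAc hAc).const_mul _)
              ((memℒp_two_integrable_mul hAc hεm).const_mul _),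
            integral_const_mul, integral_const_mul]
      _ = (α1 + α2 * β1) * variance A P + α2 * cov P A εm + cov P A εy := by
          rw [hvar, hcovm, hcovy]
  rw [hcov, hAεm, hAεy]
  have hne : variance A P ≠ 0 := ne_of_gt hVarA
  constructor
  · field_simp
    ring
  · field_simp
    ring
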